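/- Let F be a feasible R-special directed solution. A directed link (u,v) ∈ F is responsible for a dangerous ring-cut C if and only if v ∈ C and every vertex of C is v-bad (equivalently, C ⊆ I_v). -/
import Mathlib


/-- `Reach F u v`: there is a directed path of links of `F` from `u` to `v`. -/
def Reach (F : Finset (ℕ × ℕ)) (u v : ℕ) : Prop :=
  Relation.ReflTransGen (fun a b => (a, b) ∈ F) u v

/-- A directed link `(u,v)` enters a cut `C` if `v ∈ C` and `u ∉ C`. -/
def Enters (f : ℕ × ℕ) (C : Set ℕ) : Prop := f.2 ∈ C ∧ f.1 ∉ C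

/-- Two directed links cross if their intervals `[a,b]`, `[c,d]` satisfy
`a < c < b < d` or `c < a < d < b`. -/
def Crosses (f g : ℕ × ℕ) : Prop :=
  (min f.1 f.2 < min g.1 g.2 ∧ min g.1 g.2 < max f.1 f.2 ∧ max f.1 f.2 < max g.1 g.2) ∨
    (min g.1 g.2 < min f.1 f.2 ∧ min f.1 f.2 < max g.1 g.2 ∧ max g.1 g.2 < max f.1 f.2)

/-- `F` is an `R`-special directed solution (with root `r = 0`):
(1) the endpoints of every link are distinct and lie in `R`;
(2) `(R, F)` is an `r`-out arborescence;
(3) no two links of `F` cross;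
(4) no two links of `F` leaving the same vertex go in the same direction. -/
def RSpecial (R : Finset ℕ) (F : Finset (ℕ × ℕ)) : Prop :=
  (∀ f ∈ F, f.1 ≠ f.2 ∧ f.1 ∈ R ∧ f.2 ∈ R) ∧
    (∀ f ∈ F, f.2 ≠ 0) ∧
    (∀ v ∈ R, v ≠ 0 → ∃! f : ℕ × ℕ, f ∈ F ∧ f.2 = v) ∧
    (∀ v ∈ R, Reach F 0 v) ∧
    (∀ f ∈ F, ∀ g ∈ F, f ≠ g → ¬Crosses f g) ∧
    (∀ f ∈ F, ∀ g ∈ F, f ≠ g → f.1 = g.1 →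
      ¬((f.1 < f.2 ∧ g.1 < g.2) ∨ (f.2 < f.1 ∧ g.2 < g.1)))

/-- A ring-cut is an interval `{a, …, b}` with `1 ≤ a ≤ b ≤ n-1`. -/
def IsRingCut (n : ℕ) (C : Set ℕ) : Prop :=
  ∃ a b : ℕ, 1 ≤ a ∧ a ≤ b ∧ b ≤ n - 1 ∧ C = Set.Icc a b

/-- `F` is feasible: every dangerous ring-cut is entered by some link of `F`. -/
def FeasibleDir (n : ℕ) (R : Finset ℕ) (F : Finset (ℕ × ℕ)) : Prop :=
  ∀ C : Set ℕ, IsRingCut n C → (C ∩ ↑R).Nonempty → ∃ f ∈ F, Enters f C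

/-- A link `f = (u,v) ∈ F` is responsible for a cut `C` if it enters `C` and no link on the
unique directed path in `(R,F)` from the root to `u` (i.e. no link of `F` whose head is an
ancestor of `u`) enters `C`. -/
def Responsible (F : Finset (ℕ × ℕ)) (f : ℕ × ℕ) (C : Set ℕ) : Prop :=
  f ∈ F ∧ Enters f C ∧ ∀ g ∈ F, Reach F g.2 f.1 → ¬Enters g C

/-- `[a, b]` is the `v`-bad interval `I_v`: the maximal interval of `V(H)` containing `v`
that contains no terminal which is not a descendant of `v`. -/
def IsBadInterval (n : ℕ) (R : Finset ℕ) (F : Finset (ℕ × ℕ)) (v a b : ℕ) : Prop :=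
  a ≤ v ∧ v ≤ b ∧ b ≤ n - 1 ∧ (∀ w ∈ R, a ≤ w → w ≤ b → Reach F v w) ∧
    ∀ a' b' : ℕ, a' ≤ a → b ≤ b' → b' ≤ n - 1 →
      (∀ w ∈ R, a' ≤ w → w ≤ b' → Reach F v w) → a' = a ∧ b' = b


section Aux

variable {R : Finset ℕ} {F : Finset (ℕ × ℕ)}

private lemma reach0 (hsp : RSpecial R F) {x : ℕ} (hx : x ∈ R) : Reach F 0 x :=
  hsp.2.2.2.1 x hx

private lemma antisym (hsp : RSpecial R F) :
    ∀ x, Reach F 0 x → ∀ y, Reach F x y → Reach F y x → x = y := by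
  intro x hx
  induction hx with
  | refl =>
    intro y _ hy0
    rcases Relation.ReflTransGen.cases_tail hy0 with h | ⟨q, _, hq0⟩
    · exact h
    · exact absurd rfl (hsp.2.1 (q, 0) hq0)
  | @tail b w hb e ih =>
    intro y hxy hyx
    rcases Relation.ReflTransGen.cases_tail hyx with h | ⟨q, hyq, hqx⟩
    · exact h
    · have hxR : w ∈ R := (hsp.1 _ e).2.2
      have hx0 : w ≠ 0 := hsp.2.1 _ e
      have hqb : q = b := by
        have h2 := (hsp.2.2.1 w hxR hx0).unique ⟨hqx, rfl⟩ ⟨e, rfl⟩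
        exact congrArg Prod.fst h2
      rw [hqb] at hyq
      have hby : Reach F b y := Relation.ReflTransGen.head e hxy
      have hbey : b = y := ih y hby hyq
      rw [← hbey] at hxy
      have h3 : b = w := ih w (Relation.ReflTransGen.single e) hxy
      exact absurd h3 (hsp.1 _ e).1

/-- decomposition along the unique in-edge of `v`. -/
private lemma in_edge (hsp : RSpecial R F) {u v w : ℕ} (hf : (u, v) ∈ F)
    (h : Reach F w v) : w = v ∨ Reach F w u := by
  rcases Relation.ReflTransGen.cases_tail h with h' | ⟨q, hwq, hqv⟩
  · exact Or.inl h'.symm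
  · right
    have hq : q = u := by
      have h2 := (hsp.2.2.1 v (hsp.1 _ hf).2.2 (hsp.2.1 _ hf)).unique ⟨hqv, rfl⟩ ⟨hf, rfl⟩
      exact congrArg Prod.fst h2
    exact hq ▸ hwq

/-- Lemma W: every terminal strictly inside the interval of a link is a descendant
of the head of that link. -/
private lemma lemW (hsp : RSpecial R F) {x y w : ℕ} (hxy : (x, y) ∈ F) (hw : w ∈ R)
    (h1 : min x y < w) (h2 : w < max x y) : Reach F y w := by
  have h0w : Reach F 0 w := reach0 hsp hw
  have aux : ∀ w', Reach F 0 w' → min x y < w' → w' < max x y →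
      ∃ s t, (s, t) ∈ F ∧ ¬(min x y < s ∧ s < max x y) ∧ min x y < t ∧ t < max x y ∧
        Reach F t w' := by
    intro w' h
    induction h with
    | refl => intro h _; exact absurd h (Nat.not_lt_zero _)
    | @tail b q hb e ih =>
      intro hl hr
      by_cases hbin : min x y < b ∧ b < max x y
      · obtain ⟨s, t, k1, k2, k3, k4, k5⟩ := ih hbin.1 hbin.2
        exact ⟨s, t, k1, k2, k3, k4, k5.tail e⟩
      · exact ⟨b, q, e, hbin, hl, hr, Relation.ReflTransGen.refl⟩
  obtain ⟨s, t, hst, hs, ht1, ht2, htw⟩ := aux w h0w h1 h2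
  have hxyne : x ≠ y := (hsp.1 _ hxy).1
  by_cases hsy : s = y
  · subst hsy
    exact Relation.ReflTransGen.head hst htw
  by_cases hsx : s = x
  · subst hsx
    exfalso
    have hty : t ≠ y := by omega
    refine hsp.2.2.2.2.2 (s, t) hst (s, y) hxy ?_ rfl ?_
    · simp [Prod.ext_iff, hty]
    · simp only
      omega
  · exfalso
    refine hsp.2.2.2.2.1 (s, t) hst (x, y) hxy ?_ ?_
    · simp [Prod.ext_iff, hsx]
    · unfold Crosses
      simp only
      omega

/-- existence of a deepest common ancestor. -/
private lemma lca (hr : 0 ∈ R) (hsp : RSpecial R F) {v z : ℕ} (hv : v ∈ R) (hz : z ∈ R) :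
    ∃ m, Reach F m v ∧ Reach F m z ∧ Reach F 0 m ∧ m ∈ R ∧
      ∀ s, (m, s) ∈ F → Reach F s v → Reach F s z → False := by
  classical
  have key : ∀ k : ℕ, ∀ m, m ∈ R → Reach F 0 m → Reach F m v → Reach F m z →
      (R.filter (fun w => Reach F m w)).card ≤ k →
      ∃ m', Reach F m' v ∧ Reach F m' z ∧ Reach F 0 m' ∧ m' ∈ R ∧
        ∀ s, (m', s) ∈ F → Reach F s v → Reach F s z → False := by
    intro k
    induction k with
    | zero =>
      intro m hm h0 _ _ hcard
      have hmem : m ∈ R.filter (fun w => Reach F m w) :=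
        Finset.mem_filter.2 ⟨hm, Relation.ReflTransGen.refl⟩
      have := Finset.card_pos.2 ⟨m, hmem⟩
      omega
    | succ k ih =>
      intro m hm h0 hv' hz' hcard
      by_cases hs : ∃ s, (m, s) ∈ F ∧ Reach F s v ∧ Reach F s z
      · obtain ⟨s, hsF, hsv, hsz⟩ := hs
        have hsR : s ∈ R := (hsp.1 _ hsF).2.2
        have h0s : Reach F 0 s := reach0 hsp hsR
        have hsub : R.filter (fun w => Reach F s w) ⊆ R.filter (fun w => Reach F m w) := by
          intro w hw
          rw [Finset.mem_filter] at hw ⊢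
          exact ⟨hw.1, (Relation.ReflTransGen.single hsF).trans hw.2⟩
        have hmnot : m ∉ R.filter (fun w => Reach F s w) := by
          rw [Finset.mem_filter]
          rintro ⟨-, hsm⟩
          have : m = s := antisym hsp m h0 s (Relation.ReflTransGen.single hsF) hsm
          exact (hsp.1 _ hsF).1 this
        have hmmem : m ∈ R.filter (fun w => Reach F m w) :=
          Finset.mem_filter.2 ⟨hm, Relation.ReflTransGen.refl⟩
        have hlt : (R.filter (fun w => Reach F s w)).card <
            (R.filter (fun w => Reach F m w)).card :=
          Finset.card_lt_card ⟨hsub, fun h => hmnot (h hmmem)⟩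
        exact ih s hsR h0s hsv hsz (by omega)
      · exact ⟨m, hv', hz', h0, hm, fun s h1 h2 h3 => hs ⟨s, h1, h2, h3⟩⟩
  exact key (R.filter (fun w => Reach F 0 w)).card 0 hr Relation.ReflTransGen.refl
    (reach0 hsp hv) (reach0 hsp hz)
    (Finset.card_le_card (fun w hw => hw))

/-- all ancestors of `u` lie outside `C`. -/
private lemma anc_not_mem (hsp : RSpecial R F) {u v : ℕ} {C : Set ℕ} (hf : (u, v) ∈ F)
    (resp : Responsible F (u, v) C) (h0 : (0 : ℕ) ∉ C) :
    ∀ w, Reach F 0 w → Reach F w u → w ∉ C := by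
  intro w hw
  induction hw with
  | refl => intro _; exact h0
  | @tail b w' hb e ih =>
    intro hwu hwC
    have hbu : Reach F b u := (Relation.ReflTransGen.single e).trans hwu
    exact resp.2.2 (b, w') e hwu ⟨hwC, ih hbu⟩

/-- Crux: if `(u,v)` is responsible for `C = [c,d]` then the head of every link
entering `C` is a descendant of `v`. -/
private lemma cruxstep (hr : 0 ∈ R) (hsp : RSpecial R F) {u v c d : ℕ}
    (hf : (u, v) ∈ F) (hc : 1 ≤ c) (resp : Responsible F (u, v) (Set.Icc c d))
    {p z : ℕ} (hg : (p, z) ∈ F) (hent : Enters (p, z) (Set.Icc c d)) : Reach F v z := by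
  by_contra hvz
  have hvR : v ∈ R := (hsp.1 _ hf).2.2
  have hzR : z ∈ R := (hsp.1 _ hg).2.2
  have hvC : v ∈ Set.Icc c d := resp.2.1.1
  have hzC : z ∈ Set.Icc c d := hent.1
  have h0C : (0 : ℕ) ∉ Set.Icc c d := by
    simp only [Set.mem_Icc]
    omega
  have hzv : ¬Reach F z v := by
    intro h
    rcases in_edge hsp hf h with h' | h'
    · exact hvz (h' ▸ Relation.ReflTransGen.refl)
    · exact resp.2.2 (p, z) hg h' hent
  obtain ⟨m, hmv, hmz, h0m, hmR, hlca⟩ := lca hr hsp hvR hzR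
  have hmnv : m ≠ v := fun h => hvz (h ▸ hmz)
  have hmC : m ∉ Set.Icc c d := by
    rcases in_edge hsp hf hmv with h' | h'
    · exact absurd h' hmnv
    · exact anc_not_mem hsp hf resp h0C m h0m h'
  -- claim 1 : every vertex on the tree path m → v is on the same side of z as m
  have claim1 : ∀ w, Reach F m w → Reach F w v → (w < z ↔ m < z) := by
    intro w hmw
    induction hmw with
    | refl => intro _; exact Iff.rfl
    | @tail b w' hb e ih =>
      intro hwv
      have hbv : Reach F b v := (Relation.ReflTransGen.single e).trans hwv
      have hiff := ih hbv
      have hbz : b ≠ z := fun h => hzv (h ▸ hbv)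
      have hwz : w' ≠ z := fun h => hzv (h ▸ hwv)
      have hside : ¬(min b w' < z ∧ z < max b w') := by
        rintro ⟨hl, hr'⟩
        have hwrz : Reach F w' z := lemW hsp e hzR hl hr'
        have hwm : w' ≠ m := by
          intro hEq
          rw [hEq] at e
          have h4 : m = b := antisym hsp m h0m b hb (Relation.ReflTransGen.single e)
          exact (hsp.1 _ e).1 h4.symm
        have hmw' : Reach F m w' := hb.tail e
        rcases Relation.ReflTransGen.cases_head hmw' with h | ⟨s, hs1, hs2⟩
        · exact hwm h.symm
        · exact hlca s hs1 (hs2.trans hwv) (hs2.trans hwrz)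
      exact ⟨fun h' => hiff.1 (by omega), fun h' => by have := hiff.2 h'; omega⟩
  -- claim 2 : every vertex on the tree path m → z is on the same side of v as m
  have claim2 : ∀ w, Reach F m w → Reach F w z → (w < v ↔ m < v) := by
    intro w hmw
    induction hmw with
    | refl => intro _; exact Iff.rfl
    | @tail b w' hb e ih =>
      intro hwz'
      have hbz' : Reach F b z := (Relation.ReflTransGen.single e).trans hwz'
      have hiff := ih hbz'
      have hbv : b ≠ v := fun h => hvz (h ▸ hbz')
      have hwv : w' ≠ v := fun h => hvz (h ▸ hwz')
      have hside : ¬(min b w' < v ∧ v < max b w') := by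
        rintro ⟨hl, hr'⟩
        have hwrv : Reach F w' v := lemW hsp e hvR hl hr'
        have hwm : w' ≠ m := by
          intro hEq
          rw [hEq] at e
          have h4 : m = b := antisym hsp m h0m b hb (Relation.ReflTransGen.single e)
          exact (hsp.1 _ e).1 h4.symm
        have hmw' : Reach F m w' := hb.tail e
        rcases Relation.ReflTransGen.cases_head hmw' with h | ⟨s, hs1, hs2⟩
        · exact hwm h.symm
        · exact hlca s hs1 (hs2.trans hwrv) (hs2.trans hwz')
      exact ⟨fun h' => hiff.1 (by omega), fun h' => by have := hiff.2 h'; omega⟩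
  have h1 := claim1 v hmv Relation.ReflTransGen.refl
  have h2 := claim2 z hmz Relation.ReflTransGen.refl
  have hvzne : v ≠ z := fun h => hvz (h ▸ Relation.ReflTransGen.refl)
  simp only [Set.mem_Icc] at hvC hzC hmC
  omega

/-- every terminal in the cut is a descendant of `v`. -/
private lemma allterm (hr : 0 ∈ R) (hsp : RSpecial R F) {u v c d : ℕ}
    (hf : (u, v) ∈ F) (hc : 1 ≤ c) (resp : Responsible F (u, v) (Set.Icc c d)) :
    ∀ t, Reach F 0 t → t ∈ Set.Icc c d → Reach F v t := by
  intro t ht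
  induction ht with
  | refl =>
    intro h
    rw [Set.mem_Icc] at h
    omega
  | @tail b t' hb e ih =>
    intro htC
    by_cases hbC : b ∈ Set.Icc c d
    · exact (ih hbC).tail e
    · exact cruxstep hr hsp hf hc resp e ⟨htC, hbC⟩

/-- existence of the bad interval. -/
private lemma exists_bad {n : ℕ} (hR : R ⊆ Finset.range n) (hsp : RSpecial R F)
    {v : ℕ} (hv : v ∈ R) : ∃ a b, IsBadInterval n R F v a b := by
  classical
  have hvn : v ≤ n - 1 := by
    have := hR hv
    rw [Finset.mem_range] at this
    omega
  set P : ℕ → Prop := fun x => ∀ w ∈ R, x ≤ w → w ≤ v → Reach F v w with hP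
  set Q : ℕ → Prop := fun y => ∀ w ∈ R, v ≤ w → w ≤ y → Reach F v w with hQ
  have hPv : P v := by
    intro w _ hw1 hw2
    have : w = v := le_antisymm hw2 hw1
    exact this ▸ Relation.ReflTransGen.refl
  have hQv : Q v := by
    intro w _ hw1 hw2
    have : w = v := le_antisymm hw2 hw1
    exact this ▸ Relation.ReflTransGen.refl
  have hex : ∃ x, P x := ⟨v, hPv⟩
  refine ⟨Nat.find hex, Nat.findGreatest Q (n - 1), ?_, ?_, Nat.findGreatest_le _, ?_, ?_⟩
  · exact Nat.find_min' hex hPv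
  · exact Nat.le_findGreatest hvn hQv
  · intro w hw h1 h2
    rcases le_total w v with h | h
    · exact Nat.find_spec hex w hw h1 h
    · exact Nat.findGreatest_spec hvn hQv w hw h h2
  · intro a' b' ha' hb' hb'n hprop
    have hvb : v ≤ Nat.findGreatest Q (n - 1) := Nat.le_findGreatest hvn hQv
    have hPa' : P a' := fun w hw h1 h2 => hprop w hw h1 (by omega)
    have hQb' : Q b' := fun w hw h1 h2 => hprop w hw (by
      have := Nat.find_min' hex hPv
      omega) h2
    constructor
    · exact le_antisymm ha' (Nat.find_min' hex hPa')
    · exact le_antisymm (Nat.le_findGreatest hb'n hQb') hb'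

end Aux

/-- A directed link `(u,v) ∈ F` is responsible for a dangerous ring-cut `C` iff `v ∈ C`
and every vertex of `C` is `v`-bad, i.e. `C ⊆ I_v`. -/
theorem stmt6 (n : ℕ) (hn : 3 ≤ n) (R : Finset ℕ) (hR : R ⊆ Finset.range n) (hr : 0 ∈ R)
    (F : Finset (ℕ × ℕ)) (hsp : RSpecial R F) (hfeas : FeasibleDir n R F)
    (u v : ℕ) (hf : (u, v) ∈ F)
    (C : Set ℕ) (hC : IsRingCut n C) (hCR : (C ∩ ↑R).Nonempty) :
    Responsible F (u, v) C ↔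
      v ∈ C ∧ ∃ a b : ℕ, IsBadInterval n R F v a b ∧ C ⊆ Set.Icc a b := by
  obtain ⟨c, d, hc1, hcd, hdn, rfl⟩ := hC
  have hvR : v ∈ R := (hsp.1 _ hf).2.2
  have huR : u ∈ R := (hsp.1 _ hf).2.1
  have huv : u ≠ v := (hsp.1 _ hf).1
  constructor
  · intro hresp
    have hvC : v ∈ Set.Icc c d := hresp.2.1.1
    refine ⟨hvC, ?_⟩
    obtain ⟨a, b, hbad⟩ := exists_bad hR hsp hvR
    refine ⟨a, b, hbad, ?_⟩
    obtain ⟨ha_v, hv_b, hb_n, hprop, hmax⟩ := hbad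
    have hdesc : ∀ w ∈ R, c ≤ w → w ≤ d → Reach F v w := fun w hw h1 h2 =>
      allterm hr hsp hf hc1 hresp w (reach0 hsp hw) (Set.mem_Icc.2 ⟨h1, h2⟩)
    have hvc : c ≤ v := (Set.mem_Icc.1 hvC).1
    have hvd : v ≤ d := (Set.mem_Icc.1 hvC).2
    have hprop' : ∀ w ∈ R, min a c ≤ w → w ≤ max b d → Reach F v w := by
      intro w hw h1 h2
      by_cases hab : a ≤ w ∧ w ≤ b
      · exact hprop w hw hab.1 hab.2
      · refine hdesc w hw ?_ ?_ <;> omega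
    have hkey := hmax (min a c) (max b d) (min_le_left a c) (le_max_left b d)
      (max_le hb_n hdn) hprop'
    intro w hw
    simp only [Set.mem_Icc] at hw ⊢
    omega
  · rintro ⟨hvC, a, b, ⟨ha_v, hv_b, hb_n, hprop, -⟩, hsub⟩
    refine ⟨hf, ⟨hvC, ?_⟩, ?_⟩
    · intro huC
      have huab := Set.mem_Icc.1 (hsub huC)
      have h1 : Reach F v u := hprop u huR huab.1 huab.2
      have h2 : Reach F u v := Relation.ReflTransGen.single hf
      exact huv (antisym hsp u (reach0 hsp huR) v h2 h1)
    · rintro g hgF hgu ⟨hg2C, hg1C⟩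
      have hg2R : g.2 ∈ R := (hsp.1 _ hgF).2.2
      have hgab := Set.mem_Icc.1 (hsub hg2C)
      have h1 : Reach F v g.2 := hprop _ hg2R hgab.1 hgab.2
      have h2 : Reach F g.2 v := hgu.trans (Relation.ReflTransGen.single hf)
      have h3 : g.2 = v := antisym hsp g.2 (reach0 hsp hg2R) v h2 h1
      rw [h3] at hgu
      exact huv (antisym hsp u (reach0 hsp huR) v (Relation.ReflTransGen.single hf) hgu)
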